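/- Let G be a 4-connected finite simple graph with minimum degree δ, connectivity κ, and circumference c. Let S be a minimum cut-set of G and let H₁, H₂ be two distinct components of G∖S; set V₁ = V(H₁) ∪ S. Let C be a longest cycle in G which is a D₃-cycle, and let x₁x₂ be an edge of G∖C with x₁, x₂ ∈ V(H₁). Suppose Y = R ∪ R⁺ ∪ M⁺² ⊆ V₁, where R = N_C(x₁) ∪ N_C(x₂) and M = N_C(x₁) ∩ N_C(x₂). If V(H₂) ⊆ V(C), then c ≥ 4δ − κ − 2. -/

import Mathlib

namespace SimpleGraph

variable {V : Type*}

/-- `S` is a cut-set of `G`: deleting `S` disconnects the graph. -/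
def IsCutSet [Fintype V] (G : SimpleGraph V) (S : Finset V) : Prop :=
  ¬ (G.induce ((↑S : Set V)ᶜ)).Connected

/-- The vertex connectivity of `G`: the largest `k` such that `G` is `k`-connected,
i.e. `G` has more than `k` vertices and removing fewer than `k` vertices
always leaves a connected graph. -/
noncomputable def vertexConnectivity [Fintype V] (G : SimpleGraph V) : ℕ :=
  sSup {k | k < Fintype.card V ∧
    ∀ S : Finset V, S.card < k → (G.induce ((↑S : Set V)ᶜ)).Connected}

/-- `S` is a minimum cut-set of `G`: a cut-set whose cardinality equals
the connectivity of `G`. -/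
def IsMinCutSet [Fintype V] (G : SimpleGraph V) (S : Finset V) : Prop :=
  G.IsCutSet S ∧ S.card = G.vertexConnectivity

/-- The circumference of `G`: the length of a longest cycle (`0` if there is none). -/
noncomputable def circumference (G : SimpleGraph V) : ℕ :=
  sSup {n | ∃ (v : V) (C : G.Walk v v), C.IsCycle ∧ C.length = n}

/-- `C` is a longest cycle in `G`. -/
def IsLongestCycle {G : SimpleGraph V} {v : V} (C : G.Walk v v) : Prop :=
  C.IsCycle ∧ ∀ (w : V) (D : G.Walk w w), D.IsCycle → D.length ≤ C.length

/-- `C` is a dominating cycle: every edge of `G` has an endpoint on `C`. -/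
def IsDominatingCycle {G : SimpleGraph V} {v : V} (C : G.Walk v v) : Prop :=
  C.IsCycle ∧ ∀ a b : V, G.Adj a b → a ∈ C.support ∨ b ∈ C.support

/-- `C` is a `D₃`-cycle: every path of length at least 2 in `G` has a vertex
in common with `C`. -/
def IsD3Cycle {G : SimpleGraph V} {v : V} (C : G.Walk v v) : Prop :=
  C.IsCycle ∧ ∀ (a b : V) (P : G.Walk a b), P.IsPath → 2 ≤ P.length →
    ∃ z, z ∈ P.support ∧ z ∈ C.support

/-- The successor of a vertex `x` on the (oriented) cycle `C`
(and `x` itself if `x` does not lie on `C`). -/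
noncomputable def cycleSucc [DecidableEq V] {G : SimpleGraph V} {v : V}
    (C : G.Walk v v) (x : V) : V :=
  if h : x ∈ C.support.tail then C.support.tail.next x h else x

/-- The neighborhood of `x` on the cycle `C`, as a finset: `N(x) ∩ V(C)`. -/
def cycleNbhd [Fintype V] [DecidableEq V] {G : SimpleGraph V} [DecidableRel G.Adj]
    {v : V} (C : G.Walk v v) (x : V) : Finset V :=
  G.neighborFinset x ∩ C.support.toFinset

end SimpleGraph

/-! ### Auxiliary lemmas -/

namespace SimpleGraph

open Walk

variable {V : Type*} [DecidableEq V] {G : SimpleGraph V} {v : V}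

private lemma list_next_congr {l l' : List V} (h : l = l') {x : V} (hx : x ∈ l) :
    l.next x hx = l'.next x (h ▸ hx) := by subst h; rfl

private lemma tail_length {u : V} {C : G.Walk u u} : C.support.tail.length = C.length := by
  have := C.length_support
  simp only [List.length_tail, this, Nat.add_sub_cancel]

private lemma tail_ne_nil {C : G.Walk v v} (hC : C.IsCycle) : C.support.tail ≠ [] := by
  intro h
  have h3 := hC.three_le_length
  have : C.support.tail.length = C.length := tail_length
  rw [h] at this
  simp at this
  omega

private lemma mem_tail_of_mem_support {C : G.Walk v v} (hC : C.IsCycle) {x : V}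
    (hx : x ∈ C.support) : x ∈ C.support.tail := by
  rcases List.mem_cons.1 (C.support_eq_cons ▸ hx) with h | h
  · subst h
    have h1 : C.support.tail.getLast (tail_ne_nil hC) = x := by
      rw [List.getLast_tail]; exact C.getLast_support
    have h2 := List.getLast_mem (tail_ne_nil hC)
    rwa [h1] at h2
  · exact h

private lemma cycleSucc_eq {C : G.Walk v v} {x : V} (h : x ∈ C.support.tail) :
    cycleSucc C x = C.support.tail.next x h := dif_pos h

private lemma cycleSucc_mem_tail {C : G.Walk v v} {x : V} (h : x ∈ C.support.tail) :
    cycleSucc C x ∈ C.support.tail := by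
  rw [cycleSucc_eq h]; exact List.next_mem _ _ _

private lemma cycleSucc_mem_support {C : G.Walk v v} {x : V} (h : x ∈ C.support.tail) :
    cycleSucc C x ∈ C.support :=
  List.mem_of_mem_tail (cycleSucc_mem_tail h)

private lemma cycleSucc_injOn {C : G.Walk v v} (hC : C.IsCycle) {a b : V}
    (ha : a ∈ C.support.tail) (hb : b ∈ C.support.tail)
    (h : cycleSucc C a = cycleSucc C b) : a = b := by
  rw [cycleSucc_eq ha, cycleSucc_eq hb] at h
  have ha' := List.prev_next _ hC.support_nodup a ha
  have hb' := List.prev_next _ hC.support_nodup b hb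
  rw [← ha', ← hb']
  congr 1

/-- Decomposition of a cycle at a vertex `u` on it: the rest of the cycle is a
path from `u`'s successor back to `u`. -/
private lemma cycle_decomp {C : G.Walk v v} (hC : C.IsCycle) {u : V} (hu : u ∈ C.support) :
    ∃ q : G.Walk (cycleSucc C u) u, G.Adj u (cycleSucc C u) ∧ q.IsPath ∧
      q.length + 1 = C.length ∧ (∀ x ∈ q.support, x ∈ C.support) ∧
      q.support ~r C.support.tail := by
  have h3 := hC.three_le_length
  set W := C.rotate u hu with hWdef
  have hWc : W.IsCycle := hC.rotate hu
  have hrot : W.support.tail ~r C.support.tail := C.support_rotate u hu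
  have hWlen : W.length = C.length := by
    have := (C.rotate_darts u hu).perm.length_eq
    rw [length_darts, length_darts] at this; exact this
  have hnn : ¬ W.Nil := by
    rw [nil_iff_length_eq, hWlen]; omega
  obtain ⟨b, hb, q, hq⟩ := not_nil_iff.1 hnn
  have hqlen : q.length + 1 = C.length := by
    rw [← hWlen, hq]; simp
  have htail : W.support.tail = q.support := by rw [hq]; simp
  have hqr : q.support ~r C.support.tail := htail ▸ hrot
  have hqnd : q.support.Nodup := htail ▸ hWc.support_nodup
  have hqs : q.support = b :: q.support.tail := q.support_eq_cons
  have htne : q.support.tail ≠ [] := by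
    intro h
    have h1 : q.support.length = q.length + 1 := q.length_support
    rw [hqs, h] at h1
    simp [-length_eq_zero_iff] at h1
    omega
  have hg2 : q.support.tail.getLast htne = u := by
    rw [List.getLast_tail]; exact q.getLast_support
  have hut : u ∈ q.support.tail := by
    have h2 := List.getLast_mem htne
    rwa [hg2] at h2
  have hub : u ≠ b := by
    intro h
    rw [hqs, List.nodup_cons] at hqnd
    exact hqnd.1 (h ▸ hut)
  have hkey : cycleSucc C u = b := by
    rw [cycleSucc_eq (mem_tail_of_mem_support hC hu),
      List.isRotated_next_eq hqr.symm hC.support_nodup (mem_tail_of_mem_support hC hu),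
      list_next_congr hqs]
    refine List.next_getLast_cons _ _ hut b _ hub ?_ ?_
    · rw [List.getLast_cons htne]; exact hg2.symm
    · exact (hqs ▸ hqnd).of_cons
  have hqpath : q.IsPath := by
    rw [hq] at hWc
    exact ((cons_isCycle_iff q hb).1 hWc).1
  subst hkey
  exact ⟨q, hb, hqpath, hqlen,
    fun x hx => List.mem_of_mem_tail ((hqr.mem_iff).1 hx), hqr⟩

/-- Decomposition of a cycle at a vertex `w` removing `w`'s successor: a path from
the second successor back to `w`. -/
private lemma cycle_decomp2 {C : G.Walk v v} (hC : C.IsCycle) {w : V} (hw : w ∈ C.support) :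
    ∃ q : G.Walk (cycleSucc C (cycleSucc C w)) w, q.IsPath ∧
      q.length + 2 = C.length ∧ (∀ x ∈ q.support, x ∈ C.support) := by
  obtain ⟨q, _, hqp, hqlen, hsub, hqr⟩ := cycle_decomp hC hw
  have h3 := hC.three_le_length
  have hnn : ¬ q.Nil := by rw [nil_iff_length_eq]; omega
  obtain ⟨b2, hb2, q2, hq2⟩ := not_nil_iff.1 hnn
  have hws : cycleSucc C w ∈ C.support.tail :=
    cycleSucc_mem_tail (mem_tail_of_mem_support hC hw)
  have hqs : q.support = cycleSucc C w :: q2.support := by rw [hq2]; simp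
  have hq2s : cycleSucc C w :: q2.support
      = cycleSucc C w :: b2 :: q2.support.tail := by
    rw [← q2.support_eq_cons]
  have hkey : cycleSucc C (cycleSucc C w) = b2 := by
    rw [cycleSucc_eq hws,
      List.isRotated_next_eq hqr.symm hC.support_nodup hws,
      list_next_congr hqs, list_next_congr hq2s]
    exact List.next_cons_cons_eq' _ _ _ _ _ rfl
  subst hkey
  have hlen2 : q.length = q2.length + 1 := by rw [hq2]; simp
  refine ⟨q2, (hq2 ▸ hqp).of_cons, by omega, fun x hx => hsub x ?_⟩
  rw [hqs]
  exact List.mem_cons_of_mem _ hx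

/-- There is no cycle longer than a longest cycle: two-external-vertex version. -/
private lemma no_ext2 {C : G.Walk v v} (hC : IsLongestCycle C) {a u y z : V}
    (q : G.Walk a u) (hq : q.IsPath) (hsub : ∀ x ∈ q.support, x ∈ C.support)
    (hlen : C.length < q.length + 3) (hy : y ∉ C.support) (hz : z ∉ C.support)
    (hyz : G.Adj y z) (h1 : G.Adj u y) (h2 : G.Adj z a) : False := by
  have hyq : y ∉ q.support := fun h => hy (hsub _ h)
  have hzq : z ∉ q.support := fun h => hz (hsub _ h)
  have haC : a ∈ C.support := hsub _ q.start_mem_support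
  have huC : u ∈ C.support := hsub _ q.end_mem_support
  have hD : (Walk.cons h2 ((q.concat h1).concat hyz)).IsCycle := by
    rw [cons_isCycle_iff]
    constructor
    · apply IsPath.mk'
      rw [support_concat, support_concat]
      simp only [List.concat_eq_append, List.append_assoc, List.singleton_append]
      rw [List.nodup_append]
      refine ⟨hq.support_nodup, by simp [hyz.ne], ?_⟩
      intro x hx x' hx' hxx; subst hxx
      simp only [List.mem_cons, List.not_mem_nil, or_false] at hx'
      rcases hx' with rfl | rfl
      exacts [hyq hx, hzq hx]
    · intro hmem
      rw [edges_concat, edges_concat] at hmem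
      simp only [List.concat_eq_append, List.mem_append, List.mem_singleton] at hmem
      rcases hmem with (hmem | hmem) | hmem
      · exact hzq (q.fst_mem_support_of_mem_edges hmem)
      · rw [Sym2.eq_iff] at hmem
        rcases hmem with ⟨rfl, -⟩ | ⟨rfl, -⟩
        · exact hz huC
        · exact hyz.ne' rfl
      · rw [Sym2.eq_iff] at hmem
        rcases hmem with ⟨rfl, -⟩ | ⟨-, rfl⟩
        · exact hyz.ne' rfl
        · exact hy haC
  have hle := hC.2 z _ hD
  rw [length_cons, length_concat, length_concat] at hle
  omega

private lemma path_loop_length {a : V} {q : G.Walk a a} (hq : q.IsPath) : q.length = 0 := by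
  by_cases h : q.support.tail = []
  · have h1 : q.support.length = q.length + 1 := q.length_support
    rw [q.support_eq_cons, h] at h1
    simpa using h1.symm
  · exfalso
    have hg : q.support.tail.getLast h = a := by
      rw [List.getLast_tail]; exact q.getLast_support
    have hmem : a ∈ q.support.tail := by
      have h2 := List.getLast_mem h
      rwa [hg] at h2
    have := hq.support_nodup
    rw [q.support_eq_cons, List.nodup_cons] at this
    exact this.1 hmem

/-- There is no cycle longer than a longest cycle: one-external-vertex version. -/
private lemma no_ext1 {C : G.Walk v v} (hC : IsLongestCycle C) {a u y : V}
    (q : G.Walk a u) (hq : q.IsPath) (hsub : ∀ x ∈ q.support, x ∈ C.support)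
    (hlen : C.length < q.length + 2) (hy : y ∉ C.support)
    (h1 : G.Adj u y) (h2 : G.Adj y a) : False := by
  have h3 := hC.1.three_le_length
  have hyq : y ∉ q.support := fun h => hy (hsub _ h)
  have haC : a ∈ C.support := hsub _ q.start_mem_support
  have huC : u ∈ C.support := hsub _ q.end_mem_support
  by_cases hau : a = u
  · subst hau
    have := path_loop_length hq
    omega
  have hD : (Walk.cons h2 (q.concat h1)).IsCycle := by
    rw [cons_isCycle_iff]
    constructor
    · apply IsPath.mk'
      rw [support_concat]
      try simp only [List.concat_eq_append]
      rw [List.nodup_append]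
      refine ⟨hq.support_nodup, by simp, ?_⟩
      intro x hx x' hx' hxx; subst hxx
      simp only [List.mem_cons, List.not_mem_nil, or_false] at hx'
      rcases hx' with rfl
      exact hyq hx
    · intro hmem
      rw [edges_concat] at hmem
      simp only [List.concat_eq_append, List.mem_append, List.mem_singleton] at hmem
      rcases hmem with hmem | hmem
      · exact hyq (q.fst_mem_support_of_mem_edges hmem)
      · rw [Sym2.eq_iff] at hmem
        rcases hmem with ⟨rfl, -⟩ | ⟨-, rfl⟩
        · exact hy huC
        · exact hau rfl
  have hle := hC.2 y _ hD
  rw [length_cons, length_concat] at hle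
  omega

/-- Exchange argument: no vertex `u` on `C` can have `u` adjacent to `y` and
`u⁺` adjacent to `z` for external `y`, `z` with `y = z` or `y ~ z`. -/
private lemma exchange1 {C : G.Walk v v} (hC : IsLongestCycle C) {y z u : V}
    (hy : y ∉ C.support) (hz : z ∉ C.support) (hyz : G.Adj y z ∨ y = z)
    (hu : u ∈ C.support) (h1 : G.Adj u y) (h2 : G.Adj z (cycleSucc C u)) : False := by
  obtain ⟨q, -, hqp, hqlen, hsub, -⟩ := cycle_decomp hC.1 hu
  rcases hyz with hyz | rfl
  · exact no_ext2 hC q hqp hsub (by omega) hy hz hyz h1 h2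
  · exact no_ext1 hC q hqp hsub (by omega) hy h1 h2

/-- Exchange argument for second successors. -/
private lemma exchange2 {C : G.Walk v v} (hC : IsLongestCycle C) {y z w : V}
    (hy : y ∉ C.support) (hz : z ∉ C.support) (hyz : G.Adj y z)
    (hw : w ∈ C.support) (h1 : G.Adj w y)
    (h2 : G.Adj z (cycleSucc C (cycleSucc C w))) : False := by
  obtain ⟨q, hqp, hqlen, hsub⟩ := cycle_decomp2 hC.1 hw
  exact no_ext2 hC q hqp hsub (by omega) hy hz hyz h1 h2

end SimpleGraph

open SimpleGraph in
/-- If `Y ⊆ V₁` and `V(H₂) ⊆ V(C)`, then `c ≥ 4δ - κ - 2`. -/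
theorem statement_10 {V : Type*} [Fintype V] [DecidableEq V]
    (G : SimpleGraph V) [DecidableRel G.Adj]
    (h4 : 4 ≤ G.vertexConnectivity)
    (S : Finset V) (hS : G.IsMinCutSet S)
    (H₁ H₂ : (G.induce ((↑S : Set V)ᶜ)).ConnectedComponent) (hH : H₁ ≠ H₂)
    (V₁ : Set V) (hV₁ : V₁ = (Subtype.val '' H₁.supp) ∪ ↑S)
    {v : V} (C : G.Walk v v) (hC : IsLongestCycle C) (hD3 : IsD3Cycle C)
    (x₁ x₂ : V) (hadj : G.Adj x₁ x₂) (hx₁ : x₁ ∉ C.support) (hx₂ : x₂ ∉ C.support)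
    (hx₁H : x₁ ∈ Subtype.val '' H₁.supp) (hx₂H : x₂ ∈ Subtype.val '' H₁.supp)
    (R M Y : Finset V)
    (hR : R = cycleNbhd C x₁ ∪ cycleNbhd C x₂)
    (hM : M = cycleNbhd C x₁ ∩ cycleNbhd C x₂)
    (hY : Y = R ∪ R.image (cycleSucc C) ∪ M.image (cycleSucc C ∘ cycleSucc C))
    (hYV₁ : (↑Y : Set V) ⊆ V₁)
    (hH₂C : Subtype.val '' H₂.supp ⊆ {z | z ∈ C.support}) :
    4 * G.minDegree ≤ G.circumference + G.vertexConnectivity + 2 := by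
  classical
  have hCyc := hC.1
  have h3 := hCyc.three_le_length
  have hNmem : ∀ x w : V, w ∈ cycleNbhd C x ↔ G.Adj x w ∧ w ∈ C.support := by
    intro x w
    simp [cycleNbhd, Finset.mem_inter, mem_neighborFinset, List.mem_toFinset]
  -- degree bounds
  have hdeg : ∀ (x x' : V), G.Adj x x' → x ∉ C.support → x' ∉ C.support →
      G.minDegree ≤ (cycleNbhd C x).card + 1 := by
    intro x x' hxx' hx hx'
    have hsubN : G.neighborFinset x ⊆ insert x' (cycleNbhd C x) := by
      intro w hw
      rw [mem_neighborFinset] at hw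
      by_cases hwx : w = x'
      · simp [hwx]
      · have hwC : w ∈ C.support := by
          have hPp : (Walk.cons hxx'.symm (Walk.cons hw Walk.nil)).IsPath := by
            simp [Walk.isPath_def, hxx'.ne', hw.ne, Ne.symm hwx]
          have hPl : 2 ≤ (Walk.cons hxx'.symm (Walk.cons hw Walk.nil)).length := by simp
          obtain ⟨zz, hz1, hz2⟩ := hD3.2 x' w _ hPp hPl
          simp only [Walk.support_cons, Walk.support_nil, List.mem_cons,
            List.not_mem_nil, or_false] at hz1
          rcases hz1 with rfl | rfl | rfl
          · exact absurd hz2 hx'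
          · exact absurd hz2 hx
          · exact hz2
        exact Finset.mem_insert_of_mem ((hNmem x w).2 ⟨hw, hwC⟩)
    calc G.minDegree ≤ G.degree x := G.minDegree_le_degree x
      _ = (G.neighborFinset x).card := rfl
      _ ≤ (insert x' (cycleNbhd C x)).card := Finset.card_le_card hsubN
      _ ≤ (cycleNbhd C x).card + 1 := Finset.card_insert_le _ _
  have hd1 : G.minDegree ≤ (cycleNbhd C x₁).card + 1 := hdeg x₁ x₂ hadj hx₁ hx₂
  have hd2 : G.minDegree ≤ (cycleNbhd C x₂).card + 1 := hdeg x₂ x₁ hadj.symm hx₂ hx₁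
  have hd3 : G.minDegree ≤ R.card + 1 := by
    refine hd1.trans (Nat.add_le_add_right (Finset.card_le_card ?_) 1)
    rw [hR]; exact Finset.subset_union_left
  have hRM : (cycleNbhd C x₁).card + (cycleNbhd C x₂).card = R.card + M.card := by
    rw [hR, hM]; exact (Finset.card_union_add_card_inter _ _).symm
  -- basic memberships
  have hRC : ∀ w ∈ R, w ∈ C.support := by
    intro w hw; rw [hR, Finset.mem_union] at hw
    rcases hw with hw | hw
    exacts [((hNmem _ _).1 hw).2, ((hNmem _ _).1 hw).2]
  have hRt : ∀ w ∈ R, w ∈ C.support.tail := fun w hw =>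
    mem_tail_of_mem_support hCyc (hRC w hw)
  have hMR : M ⊆ R := by
    rw [hR, hM]; exact Finset.inter_subset_left.trans Finset.subset_union_left
  have hRadj : ∀ w ∈ R, G.Adj x₁ w ∨ G.Adj x₂ w := by
    intro w hw; rw [hR, Finset.mem_union] at hw
    rcases hw with hw | hw
    exacts [Or.inl ((hNmem _ _).1 hw).1, Or.inr ((hNmem _ _).1 hw).1]
  have hMadj : ∀ w ∈ M, G.Adj x₁ w ∧ G.Adj x₂ w := by
    intro w hw; rw [hM, Finset.mem_inter] at hw
    exact ⟨((hNmem _ _).1 hw.1).1, ((hNmem _ _).1 hw.2).1⟩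
  -- disjointness via exchange arguments
  have hdisj1 : Disjoint R (R.image (cycleSucc C)) := by
    rw [Finset.disjoint_right]
    intro a haim haR
    obtain ⟨u, huR, rfl⟩ := Finset.mem_image.1 haim
    obtain h1 | h1 := hRadj u huR <;> obtain h2 | h2 := hRadj _ haR
    · exact exchange1 hC hx₁ hx₁ (Or.inr rfl) (hRC u huR) h1.symm h2
    · exact exchange1 hC hx₁ hx₂ (Or.inl hadj) (hRC u huR) h1.symm h2
    · exact exchange1 hC hx₂ hx₁ (Or.inl hadj.symm) (hRC u huR) h1.symm h2
    · exact exchange1 hC hx₂ hx₂ (Or.inr rfl) (hRC u huR) h1.symm h2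
  have hdisj2 : Disjoint (R ∪ R.image (cycleSucc C)) (M.image (cycleSucc C ∘ cycleSucc C)) := by
    rw [Finset.disjoint_right]
    intro a haim haU
    obtain ⟨w, hwM, rfl⟩ := Finset.mem_image.1 haim
    simp only [Function.comp_apply] at haU
    obtain ⟨hw1, hw2⟩ := hMadj w hwM
    rcases Finset.mem_union.1 haU with haR | haim'
    · obtain h2 | h2 := hRadj _ haR
      · exact exchange2 hC hx₂ hx₁ hadj.symm (hRC w (hMR hwM)) hw2.symm h2
      · exact exchange2 hC hx₁ hx₂ hadj (hRC w (hMR hwM)) hw1.symm h2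
    · obtain ⟨u, huR, hequ⟩ := Finset.mem_image.1 haim'
      have hwt : cycleSucc C w ∈ C.support.tail :=
        cycleSucc_mem_tail (mem_tail_of_mem_support hCyc (hRC w (hMR hwM)))
      have heq : u = cycleSucc C w := cycleSucc_injOn hCyc (hRt u huR) hwt hequ
      obtain h2 | h2 := hRadj u huR <;> rw [heq] at h2
      · exact exchange1 hC hx₁ hx₁ (Or.inr rfl) (hRC w (hMR hwM)) hw1.symm h2
      · exact exchange1 hC hx₁ hx₂ (Or.inl hadj) (hRC w (hMR hwM)) hw1.symm h2
  have hinj1 : Set.InjOn (cycleSucc C) ↑R := by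
    intro a ha b hb h
    exact cycleSucc_injOn hCyc (hRt a (Finset.mem_coe.1 ha)) (hRt b (Finset.mem_coe.1 hb)) h
  have hinj2 : Set.InjOn (cycleSucc C ∘ cycleSucc C) ↑M := by
    intro a ha b hb h
    simp only [Function.comp_apply] at h
    have haM := hMR (Finset.mem_coe.1 ha)
    have hbM := hMR (Finset.mem_coe.1 hb)
    have ha' := cycleSucc_mem_tail (hRt a haM)
    have hb' := cycleSucc_mem_tail (hRt b hbM)
    exact cycleSucc_injOn hCyc (hRt a haM) (hRt b hbM)
      (cycleSucc_injOn hCyc ha' hb' h)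
  have hYcard : Y.card = R.card + R.card + M.card := by
    rw [hY, Finset.card_union_of_disjoint hdisj2, Finset.card_union_of_disjoint hdisj1,
      Finset.card_image_of_injOn hinj1, Finset.card_image_of_injOn hinj2]
  -- Y lies on C
  have hYsub : Y ⊆ C.support.toFinset := by
    rw [hY]
    intro a ha
    rw [List.mem_toFinset]
    rcases Finset.mem_union.1 ha with ha | ha
    · rcases Finset.mem_union.1 ha with ha | ha
      · exact hRC a ha
      · obtain ⟨u, huR, rfl⟩ := Finset.mem_image.1 ha
        exact cycleSucc_mem_support (hRt u huR)
    · obtain ⟨w, hwM, rfl⟩ := Finset.mem_image.1 ha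
      exact cycleSucc_mem_support (cycleSucc_mem_tail (hRt w (hMR hwM)))
  -- the second component H₂
  set F₂ : Finset V := (Set.toFinite (Subtype.val '' H₂.supp)).toFinset with hF₂def
  have hF₂mem : ∀ a, a ∈ F₂ ↔ a ∈ Subtype.val '' H₂.supp := fun a =>
    Set.Finite.mem_toFinset _
  obtain ⟨u₀s, hu₀⟩ := H₂.exists_rep
  have hu₀mk : (G.induce ((↑S : Set V)ᶜ)).connectedComponentMk u₀s = H₂ := hu₀
  have hu₀S : (u₀s : V) ∉ S := fun hc => u₀s.2 (Finset.mem_coe.2 hc)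
  have hu₀F : (u₀s : V) ∈ F₂ := by
    rw [hF₂mem]
    exact ⟨u₀s, (ConnectedComponent.mem_supp_iff _ _).2 hu₀mk, rfl⟩
  have hnbr : G.neighborFinset (u₀s : V) ⊆ F₂.erase (u₀s : V) ∪ S := by
    intro w hw
    rw [mem_neighborFinset] at hw
    by_cases hwS : w ∈ S
    · exact Finset.mem_union_right _ hwS
    · have hwc : w ∈ ((↑S : Set V)ᶜ) := by simpa using hwS
      have hadj' : (G.induce ((↑S : Set V)ᶜ)).Adj ⟨w, hwc⟩ u₀s := by
        simp only [comap_adj, Function.Embedding.coe_subtype]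
        exact hw.symm
      have hcomp : (G.induce ((↑S : Set V)ᶜ)).connectedComponentMk ⟨w, hwc⟩ = H₂ := by
        rw [← hu₀mk]
        exact ConnectedComponent.sound hadj'.reachable
      refine Finset.mem_union_left _ (Finset.mem_erase.2 ⟨hw.ne', ?_⟩)
      rw [hF₂mem]
      exact ⟨⟨w, hwc⟩, (ConnectedComponent.mem_supp_iff _ _).2 hcomp, rfl⟩
  have hdegF : G.minDegree + 1 ≤ F₂.card + S.card := by
    have h1 : G.minDegree ≤ (F₂.erase (u₀s : V) ∪ S).card :=
      (G.minDegree_le_degree _).trans (Finset.card_le_card hnbr)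
    have h2 : (F₂.erase (u₀s : V) ∪ S).card ≤ (F₂.erase (u₀s : V)).card + S.card :=
      Finset.card_union_le _ _
    have h3' : (F₂.erase (u₀s : V)).card + 1 = F₂.card :=
      Finset.card_erase_add_one hu₀F
    omega
  have hF₂sub : F₂ ⊆ C.support.toFinset := by
    intro a ha
    rw [List.mem_toFinset]
    exact hH₂C ((hF₂mem a).1 ha)
  have hdisjYF : Disjoint Y F₂ := by
    rw [Finset.disjoint_left]
    intro a haY haF
    have haV₁ : a ∈ V₁ := hYV₁ haY
    rw [hV₁] at haV₁
    obtain ⟨bs, hbs, hbsa⟩ := (hF₂mem a).1 haF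
    rcases haV₁ with haH₁ | haS
    · obtain ⟨cs, hcs, hcsa⟩ := haH₁
      have : cs = bs := Subtype.ext (hcsa.trans hbsa.symm)
      subst this
      exact hH (((ConnectedComponent.mem_supp_iff _ _).1 hcs).symm.trans
        ((ConnectedComponent.mem_supp_iff _ _).1 hbs))
    · have : (bs : V) ∈ ((↑S : Set V)ᶜ) := bs.2
      rw [hbsa] at this
      exact this haS
  -- counting on C
  have hsupc : C.support.toFinset.card = C.length := by
    conv_lhs => rw [C.support_eq_cons]
    rw [List.toFinset_cons,
      Finset.insert_eq_self.2 (List.mem_toFinset.2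
        (mem_tail_of_mem_support hCyc C.start_mem_support)),
      List.toFinset_card_of_nodup hCyc.support_nodup]
    exact tail_length
  have hcount : Y.card + F₂.card ≤ C.length := by
    have h1 : (Y ∪ F₂).card ≤ C.support.toFinset.card :=
      Finset.card_le_card (Finset.union_subset hYsub hF₂sub)
    rw [Finset.card_union_of_disjoint hdisjYF, hsupc] at h1
    exact h1
  have hcirc : C.length ≤ G.circumference := by
    apply le_csSup
    · refine ⟨Fintype.card V, ?_⟩
      rintro n ⟨w, D, hD, rfl⟩
      have h1 : D.support.tail.length = D.length := tail_length
      calc D.length = D.support.tail.length := h1.symm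
        _ ≤ Fintype.card V := (hD.support_nodup).length_le_card
    · exact ⟨v, C, hCyc, rfl⟩
  have hκ : S.card = G.vertexConnectivity := hS.2
  omega
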